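/- arXiv:2310.17795 — 3 statements merged into one kernel-verified Lean document; each statement's English description precedes it below -/
import Mathlib

section
/- Let (T,X) be a rooted tree-decomposition of a graph G with X = (X_t : t ∈ V(T)), let T' be a subtree of T with X' = (X_t : t ∈ V(T')), and let G' = G[⋃_{t ∈ V(T')} X_t]. Let m,s,r,k,N be integers and let L be a hereditarily (T,X,m,s,r,k,N)-extendable list-assignment of G. Let L' be a list-assignment of G' such that L'(v) ⊇ L(v) for every v ∈ V(G') and 1_{L'} ∩ X_t = ∅ for every t ∈ V(T) − V(T'). If L' is (T',X',m,s,r,k)-legitimate, then L' is hereditarily (T',X',m,s,r,k,N)-extendable. -/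
open SimpleGraph

universe u v

/-- The data of a rooted tree-decomposition: a tree on the node type `ι`,
a root node, and a bag for each node. -/
structure RTD (V : Type u) (ι : Type v) where
  tree : SimpleGraph ι
  root : ι
  bag : ι → Set V

namespace RTD

variable {V : Type u} {ι : Type v}

/-- `t'` is a child of `t` in the rooted tree. -/
def IsChild (D : RTD V ι) (t t' : ι) : Prop :=
  D.tree.Adj t t' ∧ D.tree.dist D.root t' = D.tree.dist D.root t + 1

/-- `(D.tree, (D.bag t ∩ A : t))` is a (rooted) tree-decomposition of the induced
subgraph `G[A]`. -/
def IsTDOn (D : RTD V ι) (G : SimpleGraph V) (A : Set V) : Prop :=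
  D.tree.IsTree ∧
  (∀ v ∈ A, ∃ t, v ∈ D.bag t) ∧
  (∀ a b, a ∈ A → b ∈ A → G.Adj a b → ∃ t, a ∈ D.bag t ∧ b ∈ D.bag t) ∧
  (∀ v ∈ A, (D.tree.induce {t | v ∈ D.bag t}).Connected)

end RTD

/-- There is a walk of length at most `n` from `a` to `b` inside the induced
subgraph `G[A]` (i.e. `dist_{G[A]}(a,b) ≤ n`). -/
def DistLEIn {V : Type u} (G : SimpleGraph V) (A : Set V) (a b : V) (n : ℕ) : Prop :=
  ∃ w : G.Walk a b, w.length ≤ n ∧ ∀ v ∈ w.support, v ∈ A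

/-- `a` and `b` lie in a common monochromatic component of the coloring `c`
restricted to the set `S` of colored vertices. -/
def MonoReach {β : Type*} {α : Type*} (G : SimpleGraph β) (S : Set β) (c : β → α)
    (a b : β) : Prop :=
  ∃ w : G.Walk a b, ∀ v ∈ w.support, v ∈ S ∧ c v = c a

/-- `L` is a `(T, X ∩ A, m, s, r, k)`-legitimate list-assignment of the induced
subgraph `G[A]`:
(L1) every list has size `1` or `m`;
(L2) for every node `t`, the set of vertices of the bag at `t` with singleton lists
is `(s,r)`-centered in `G[A ∩ X_t]`;
(L3) the unique coloring determined by the singleton lists has weak diameter at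
most `k` in `G[A]`. -/
def LegitOn {V : Type u} {ι : Type v} (G : SimpleGraph V) (D : RTD V ι) (A : Set V)
    (L : V → Finset ℕ) (m s r k : ℕ) : Prop :=
  (∀ v ∈ A, (L v).card = 1 ∨ (L v).card = m) ∧
  (∀ t : ι, ∃ S : Set V, S ⊆ A ∩ D.bag t ∧ S.ncard ≤ s ∧
    ∀ z ∈ A ∩ D.bag t, (L z).card = 1 →
      ∃ x ∈ S, ∃ w : G.Walk z x, w.length ≤ r ∧ ∀ v ∈ w.support, v ∈ A ∩ D.bag t) ∧
  (∀ c : V → ℕ, (∀ v ∈ A, (L v).card = 1 → c v ∈ L v) →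
    ∀ a b : V, MonoReach G {v | v ∈ A ∧ (L v).card = 1} c a b → DistLEIn G A a b k)

/-- A child-extension at `t` of `G[A]` with respect to the rooted tree-decomposition
`(D.tree, (D.bag · ∩ A))`, with type `U` of new vertices: it is obtained from
`G[A ∩ X_t]` by adding the new vertices and new edges, each new edge joining two new
vertices belonging to the same child, or a new vertex belonging to a child `t'` and a
vertex of `X_t ∩ X_{t'}`, so that every component of the subgraph induced by the new
vertices has at most two vertices. -/
structure ChildExt {V : Type u} {ι : Type v} (G : SimpleGraph V) (D : RTD V ι)
    (A : Set V) (t : ι) (U : Type u) where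
  graph : SimpleGraph (↥(A ∩ D.bag t) ⊕ U)
  owner : U → ι
  base_adj : ∀ x y : ↥(A ∩ D.bag t),
    graph.Adj (Sum.inl x) (Sum.inl y) ↔ G.Adj (x : V) (y : V)
  owner_child : ∀ u : U, D.IsChild t (owner u)
  mixed_adj : ∀ (x : ↥(A ∩ D.bag t)) (u : U),
    graph.Adj (Sum.inl x) (Sum.inr u) → (x : V) ∈ D.bag (owner u)
  new_adj : ∀ u u' : U, graph.Adj (Sum.inr u) (Sum.inr u') → owner u = owner u'
  new_small : ∀ u₁ u₂ u₃ : U, graph.Adj (Sum.inr u₁) (Sum.inr u₂) →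
    graph.Adj (Sum.inr u₂) (Sum.inr u₃) → u₁ = u₃

/-- `L` is a `(T, X ∩ A, m, s, r, k, N)`-extendable list-assignment of `G[A]`:
(E1) it is legitimate, and (E2) for every node `t`, every child-extension at `t` and
every list-assignment of it agreeing with `L` on the bag at `t`, the child-extension
has a coloring from the lists with weak diameter at most `N` (in the child-extension). -/
def ExtOn {V : Type u} {ι : Type v} (G : SimpleGraph V) (D : RTD V ι) (A : Set V)
    (L : V → Finset ℕ) (m s r k N : ℕ) : Prop :=
  LegitOn G D A L m s r k ∧
  ∀ (t : ι) (U : Type u), Fintype U →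
    ∀ (E : ChildExt G D A t U) (Lt : (↥(A ∩ D.bag t) ⊕ U) → Finset ℕ),
      (∀ z, (Lt z).Nonempty) →
      (∀ x : ↥(A ∩ D.bag t), Lt (Sum.inl x) = L (x : V)) →
      ∃ c : (↥(A ∩ D.bag t) ⊕ U) → ℕ, (∀ z, c z ∈ Lt z) ∧
        ∀ a b, MonoReach E.graph Set.univ c a b → ∃ w : E.graph.Walk a b, w.length ≤ N

/-- `L` is a hereditarily `(T, X ∩ A, m, s, r, k, N)`-extendable list-assignment of
`G[A]`: (H1) it is legitimate, and (H2) for every induced subgraph `G[A']` of `G[A]`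
and every list-assignment `L'` with `L'(v) ⊇ L(v)`, if `L'` is legitimate for `G[A']`
then it is extendable for `G[A']`. -/
def HeredExtOn {V : Type u} {ι : Type v} (G : SimpleGraph V) (D : RTD V ι) (A : Set V)
    (L : V → Finset ℕ) (m s r k N : ℕ) : Prop :=
  LegitOn G D A L m s r k ∧
  ∀ A' : Set V, A' ⊆ A → ∀ L' : V → Finset ℕ, (∀ v ∈ A', L v ⊆ L' v) →
    LegitOn G D A' L' m s r k → ExtOn G D A' L' m s r k N

set_option linter.unusedSectionVars false

section AuxTree


variable {α : Type*} [DecidableEq α] {T : SimpleGraph α}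

private lemma aux_path_length_eq_dist (hT : T.IsTree) {a b : α} (p : T.Walk a b)
    (hp : p.IsPath) : p.length = T.dist a b := by
  obtain ⟨w, hw⟩ := hT.isConnected.exists_walk_length_eq_dist a b
  have hpw : p = w.bypass :=
    congrArg Subtype.val (hT.IsAcyclic.path_unique ⟨p, hp⟩ ⟨w.bypass, w.bypass_isPath⟩)
  refine le_antisymm ?_ (SimpleGraph.dist_le p)
  calc p.length = w.bypass.length := by rw [hpw]
    _ ≤ w.length := Walk.length_bypass_le w
    _ = T.dist a b := hw

private lemma aux_adj_dist_eq_one (hT : T.IsTree) {x y : α} (h : T.Adj x y) :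
    T.dist x y = 1 := by
  have hp : (Walk.cons h Walk.nil : T.Walk x y).IsPath := by
    simp [Walk.cons_isPath_iff, h.ne]
  simpa using (aux_path_length_eq_dist hT _ hp).symm

private lemma aux_concat_isPath {u v : α} {p : T.Walk u v} (hp : p.IsPath) {w : α}
    (h : T.Adj v w) (hw : w ∉ p.support) : (p.concat h).IsPath := by
  rw [Walk.isPath_def, Walk.support_concat, List.nodup_append]
  refine ⟨hp.support_nodup, List.nodup_singleton _, ?_⟩
  intro x hx b hb hxb
  rw [List.mem_singleton] at hb
  subst hb hxb; exact hw hx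

private lemma aux_adj_dist (hT : T.IsTree) (w : α) {x y : α} (h : T.Adj x y) :
    T.dist w y = T.dist w x + 1 ∨ T.dist w x = T.dist w y + 1 := by
  obtain ⟨q, hq⟩ := hT.isConnected.exists_walk_length_eq_dist w x
  have hp : q.bypass.IsPath := q.bypass_isPath
  have hlen : q.bypass.length = T.dist w x := aux_path_length_eq_dist hT _ hp
  by_cases hy : y ∈ q.bypass.support
  · right
    have h1 : (q.bypass.takeUntil y hy).length = T.dist w y :=
      aux_path_length_eq_dist hT _ (hp.takeUntil hy)
    have h2 : (q.bypass.dropUntil y hy).length = T.dist y x :=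
      aux_path_length_eq_dist hT _ (hp.dropUntil hy)
    have h3 : T.dist y x = 1 := aux_adj_dist_eq_one hT h.symm
    have h4 : (q.bypass.takeUntil y hy).length + (q.bypass.dropUntil y hy).length
        = q.bypass.length := by
      rw [← Walk.length_append, Walk.take_spec]
    omega
  · left
    have := aux_path_length_eq_dist hT _ (aux_concat_isPath hp h hy)
    rw [Walk.length_concat, hlen] at this
    omega

private lemma aux_parent_unique (hT : T.IsTree) {w y a b : α}
    (ha : T.Adj a y) (hb : T.Adj b y)
    (hda : T.dist w a + 1 = T.dist w y) (hdb : T.dist w b + 1 = T.dist w y) : a = b := by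
  obtain ⟨qa, hqa⟩ := hT.isConnected.exists_walk_length_eq_dist w a
  obtain ⟨qb, hqb⟩ := hT.isConnected.exists_walk_length_eq_dist w b
  have hpa : qa.bypass.IsPath := qa.bypass_isPath
  have hpb : qb.bypass.IsPath := qb.bypass_isPath
  have hla : qa.bypass.length = T.dist w a := aux_path_length_eq_dist hT _ hpa
  have hlb : qb.bypass.length = T.dist w b := aux_path_length_eq_dist hT _ hpb
  have hya : y ∉ qa.bypass.support := by
    intro hy
    have h1 : (qa.bypass.takeUntil y hy).length = T.dist w y :=
      aux_path_length_eq_dist hT _ (hpa.takeUntil hy)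
    have h2 := Walk.length_takeUntil_le qa.bypass hy
    omega
  have hyb : y ∉ qb.bypass.support := by
    intro hy
    have h1 : (qb.bypass.takeUntil y hy).length = T.dist w y :=
      aux_path_length_eq_dist hT _ (hpb.takeUntil hy)
    have h2 := Walk.length_takeUntil_le qb.bypass hy
    omega
  have heq : qa.bypass.concat ha = qb.bypass.concat hb :=
    congrArg Subtype.val (hT.IsAcyclic.path_unique
      ⟨_, aux_concat_isPath hpa ha hya⟩ ⟨_, aux_concat_isPath hpb hb hyb⟩)
  have h2 := congrArg (fun (z : T.Walk w y) => z.reverse.getVert 1) heq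
  simpa [Walk.reverse_concat, Walk.getVert_cons] using h2

private lemma aux_exists_concat {a b : α} (p : T.Walk a b) (hp : p.length ≠ 0) :
    ∃ (c : α) (q : T.Walk a c) (h : T.Adj c b), p = q.concat h := by
  cases p with
  | nil => simp at hp
  | cons h q =>
    obtain ⟨x, q', h', hc⟩ := Walk.exists_cons_eq_concat h q
    exact ⟨x, q', h', hc⟩

private lemma aux_lift_walk {s : Set α} {a b : α} (p : T.Walk a b) (ha : a ∈ s) (hb : b ∈ s)
    (hsupp : ∀ v ∈ p.support, v ∈ s) :
    ∃ q : (T.induce s).Walk ⟨a, ha⟩ ⟨b, hb⟩, q.length = p.length := by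
  induction p with
  | nil => exact ⟨Walk.nil, rfl⟩
  | @cons u c b h p ih =>
    have hc : c ∈ s := hsupp c (by simp)
    obtain ⟨q, hq⟩ := ih hc hb (fun v hv => hsupp v (by simp; exact Or.inr hv))
    exact ⟨Walk.cons (by simpa using h) q, by simp [hq]⟩

private lemma aux_dist_induce_eq (hT : T.IsTree) {s : Set α} (hs : (T.induce s).Connected)
    (a b : ↥s) : (T.induce s).dist a b = T.dist ↑a ↑b := by
  obtain ⟨q, hq⟩ := hs.exists_walk_length_eq_dist a b
  have h1 : T.dist ↑a ↑b ≤ (T.induce s).dist a b := by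
    have := SimpleGraph.dist_le (q.map (SimpleGraph.Embedding.induce s).toHom)
    rwa [Walk.length_map, hq] at this
  have h2 : (T.induce s).dist a b ≤ T.dist ↑a ↑b := by
    set w := (q.map (SimpleGraph.Embedding.induce s).toHom).bypass with hwdef
    have hw : w.IsPath := Walk.bypass_isPath _
    have hsupp : ∀ v ∈ w.support, v ∈ s := by
      intro v hv
      have := Walk.support_bypass_subset _ hv
      rw [Walk.support_map] at this
      obtain ⟨u, _, rfl⟩ := List.mem_map.mp this
      exact u.2
    obtain ⟨q', hq'⟩ := aux_lift_walk w a.2 b.2 hsupp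
    have := SimpleGraph.dist_le q'
    rwa [hq', aux_path_length_eq_dist hT w hw] at this
  omega

private lemma aux_dist_root_aux (hT : T.IsTree) {s : Set α} {root root' : α}
    (hmin : ∀ t ∈ s, T.dist root root' ≤ T.dist root t) :
    ∀ n : ℕ, ∀ {x : α} (p : T.Walk root' x), p.length ≤ n → p.IsPath →
      (∀ v ∈ p.support, v ∈ s) → T.dist root x = T.dist root root' + p.length := by
  intro n
  induction n with
  | zero =>
    intro x p hlen _ _
    have h0 : p.length = 0 := Nat.le_zero.mp hlen
    obtain rfl := Walk.eq_of_length_eq_zero h0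
    omega
  | succ n ih =>
    intro x p hlen hp hsupp
    by_cases hl : p.length ≤ n
    · exact ih p hl hp hsupp
    have hlen' : p.length = n + 1 := by omega
    obtain ⟨y, q, e, rfl⟩ := aux_exists_concat p (by omega)
    have hq : q.IsPath := by
      have : (q.append (Walk.cons e Walk.nil)).IsPath := hp
      exact this.of_append_left
    have hqlen : q.length = n := by
      have := Walk.length_concat q e; omega
    have hqsupp : ∀ v ∈ q.support, v ∈ s := by
      intro v hv
      exact hsupp v (by rw [Walk.support_concat]; exact List.mem_append_left _ hv)
    have hxs : x ∈ s := hsupp x (Walk.end_mem_support _)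
    have hxq : x ∉ q.support := by
      have hnd := hp.support_nodup
      rw [Walk.support_concat, List.nodup_append] at hnd
      intro hx
      exact hnd.2.2 x hx x (List.mem_singleton_self x) rfl
    have hdy : T.dist root y = T.dist root root' + n := by
      have := ih q (by omega) hq hqsupp; omega
    rcases aux_adj_dist hT root e with hgood | hbad
    · rw [Walk.length_concat]; omega
    · exfalso
      rcases Nat.eq_zero_or_pos n with hn0 | hnpos
      · subst hn0
        obtain rfl := Walk.eq_of_length_eq_zero hqlen
        have := hmin x hxs
        omega
      · obtain ⟨z, q', e', rfl⟩ := aux_exists_concat q (by omega)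
        have hq' : q'.IsPath := by
          have : (q'.append (Walk.cons e' Walk.nil)).IsPath := hq
          exact this.of_append_left
        have hq'len : q'.length = n - 1 := by
          have := Walk.length_concat q' e'; omega
        have hdz : T.dist root z = T.dist root root' + (n - 1) := by
          have := ih q' (by omega) hq' (fun v hv => hqsupp v
            (by rw [Walk.support_concat]; exact List.mem_append_left _ hv))
          omega
        have hzx : z = x := by
          refine aux_parent_unique hT (w := root) e' e.symm ?_ ?_ <;> omega
        apply hxq
        rw [← hzx, Walk.support_concat]
        exact List.mem_append_left _ (Walk.end_mem_support _)

private lemma aux_dist_add (hT : T.IsTree) {s : Set α} (hs : (T.induce s).Connected)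
    {root root' : α} (h' : root' ∈ s)
    (hmin : ∀ t ∈ s, T.dist root root' ≤ T.dist root t)
    {x : α} (hx : x ∈ s) :
    T.dist root x = T.dist root root' + T.dist root' x := by
  obtain ⟨q0⟩ := hs.preconnected ⟨root', h'⟩ ⟨x, hx⟩
  set w := (q0.map (SimpleGraph.Embedding.induce s).toHom).bypass with hwdef
  have hw : w.IsPath := Walk.bypass_isPath _
  have hsupp : ∀ v ∈ w.support, v ∈ s := by
    intro v hv
    have := Walk.support_bypass_subset _ hv
    rw [Walk.support_map] at this
    obtain ⟨u, _, rfl⟩ := List.mem_map.mp this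
    exact u.2
  have hlen : w.length = T.dist root' x := aux_path_length_eq_dist hT w hw
  have h0 : T.dist root x = T.dist root root' + w.length :=
    aux_dist_root_aux hT hmin w.length w le_rfl hw hsupp
  omega

end AuxTree

/-- **Lemma.** Let `(T,X)` be a rooted tree-decomposition of `G`, let `T'` be a subtree
of `T` (given by the connected set `J` of nodes, rooted at its node `root'` closest to
the root of `T`), let `X' = (X_t : t ∈ J)` and `G' = G[⋃_{t ∈ J} X_t]`. If `L` is a
hereditarily `(T,X,m,s,r,k,N)`-extendable list-assignment of `G`, and `L'` is a
list-assignment of `G'` with `L'(v) ⊇ L(v)` for every vertex `v` of `G'` and with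
`1_{L'} ∩ X_t = ∅` for every node `t ∈ V(T) − J`, and `L'` is
`(T',X',m,s,r,k)`-legitimate, then `L'` is hereditarily
`(T',X',m,s,r,k,N)`-extendable. -/
theorem hereditarily_extendable_restricts_to_subtree
    {V : Type u} {ι : Type v} [Fintype V] [Fintype ι]
    (G : SimpleGraph V) (D : RTD V ι) (hD : D.IsTDOn G Set.univ)
    (J : Set ι) (hJconn : (D.tree.induce J).Connected)
    (root' : ι) (hroot'J : root' ∈ J)
    (hroot' : ∀ t ∈ J, D.tree.dist D.root root' ≤ D.tree.dist D.root t)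
    (D' : RTD V ↥J)
    (hD'tree : D'.tree = D.tree.induce J)
    (hD'root : D'.root = ⟨root', hroot'J⟩)
    (hD'bag : ∀ t : ↥J, D'.bag t = D.bag (t : ι))
    (A' : Set V) (hA' : A' = {v | ∃ t ∈ J, v ∈ D.bag t})
    (L : V → Finset ℕ) (hLne : ∀ x, (L x).Nonempty)
    (m s r k N : ℕ)
    (hher : HeredExtOn G D Set.univ L m s r k N)
    (L' : V → Finset ℕ) (hL'ne : ∀ v ∈ A', (L' v).Nonempty)
    (hsup : ∀ v ∈ A', L v ⊆ L' v)
    (hout : ∀ t : ι, t ∉ J → ∀ v ∈ D.bag t, v ∈ A' → (L' v).card ≠ 1)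
    (hleg' : LegitOn G D' A' L' m s r k) :
    HeredExtOn G D' A' L' m s r k N := by
  classical
  have hTtree : D.tree.IsTree := hD.1
  refine ⟨hleg', ?_⟩
  intro A'' hA''sub L'' hL''sup hleg''
  have hlegD : LegitOn G D A'' L'' m s r k := by
    obtain ⟨h1, h2, h3⟩ := hleg''
    refine ⟨h1, ?_, h3⟩
    intro t
    by_cases ht : t ∈ J
    · obtain ⟨S, hS1, hS2, hS3⟩ := h2 ⟨t, ht⟩
      rw [hD'bag ⟨t, ht⟩] at hS1 hS3
      exact ⟨S, hS1, hS2, hS3⟩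
    · refine ⟨∅, by simp, by simp, ?_⟩
      intro z hz h1z
      exfalso
      have hzA' : z ∈ A' := hA''sub hz.1
      have hcard := hout t ht z hz.2 hzA'
      have hne : 1 ≤ (L' z).card := Finset.card_pos.mpr (hL'ne z hzA')
      have h2' : (L' z).card ≤ (L'' z).card := Finset.card_le_card (hL''sup z hz.1)
      omega
  have hext := hher.2 A'' (fun _ _ => trivial) L''
    (fun v hv => (hsup v (hA''sub hv)).trans (hL''sup v hv)) hlegD
  refine ⟨hleg'', ?_⟩
  intro tt U hU E Lt hLtne hLtagree
  have hbag : A'' ∩ D'.bag tt = A'' ∩ D.bag (tt : ι) := by rw [hD'bag]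
  let e : ↥(A'' ∩ D'.bag tt) ≃ ↥(A'' ∩ D.bag (tt : ι)) :=
    { toFun := fun x => ⟨x.1, by rw [← hbag]; exact x.2⟩
      invFun := fun x => ⟨x.1, by rw [hbag]; exact x.2⟩
      left_inv := fun x => rfl
      right_inv := fun x => rfl }
  let f : (↥(A'' ∩ D'.bag tt) ⊕ U) ≃ (↥(A'' ∩ D.bag (tt : ι)) ⊕ U) :=
    Equiv.sumCongr e (Equiv.refl U)
  have hchild : ∀ t' : ↥J, D'.IsChild tt t' → D.IsChild (tt : ι) (t' : ι) := by
    rintro t' ⟨hadj, hdist⟩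
    rw [hD'tree] at hadj
    rw [hD'tree, hD'root] at hdist
    rw [aux_dist_induce_eq hTtree hJconn ⟨root', hroot'J⟩ t',
      aux_dist_induce_eq hTtree hJconn ⟨root', hroot'J⟩ tt] at hdist
    have hdist' : D.tree.dist root' (t' : ι) = D.tree.dist root' (tt : ι) + 1 := hdist
    have h1 := aux_dist_add hTtree hJconn hroot'J hroot' t'.2
    have h2 := aux_dist_add hTtree hJconn hroot'J hroot' tt.2
    exact ⟨hadj, by omega⟩
  let g' : SimpleGraph (↥(A'' ∩ D.bag (tt : ι)) ⊕ U) :=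
    { Adj := fun x y => E.graph.Adj (f.symm x) (f.symm y)
      symm := ⟨fun x y h => E.graph.symm.symm _ _ h⟩
      loopless := ⟨fun x h => E.graph.loopless.irrefl _ h⟩ }
  let E' : ChildExt G D A'' (tt : ι) U :=
    { graph := g'
      owner := fun u => (E.owner u : ι)
      base_adj := fun x y => E.base_adj (e.symm x) (e.symm y)
      owner_child := fun u => hchild _ (E.owner_child u)
      mixed_adj := by
        intro x u h
        have := E.mixed_adj (e.symm x) u h
        rw [hD'bag] at this
        exact this
      new_adj := fun u u' h => congrArg Subtype.val (E.new_adj u u' h)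
      new_small := fun u₁ u₂ u₃ h h' => E.new_small u₁ u₂ u₃ h h' }
  obtain ⟨c', hc'1, hc'2⟩ := hext.2 (tt : ι) U hU E' (fun z => Lt (f.symm z))
    (fun z => hLtne _) (fun x => hLtagree (e.symm x))
  refine ⟨fun z => c' (f z), fun z => ?_, ?_⟩
  · have := hc'1 (f z)
    simpa using this
  · rintro a b ⟨w, hw⟩
    have hphi : ∀ {x y}, E.graph.Adj x y → g'.Adj (f x) (f y) := by
      intro x y hxy
      show E.graph.Adj (f.symm (f x)) (f.symm (f y))
      rwa [Equiv.symm_apply_apply, Equiv.symm_apply_apply]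
    let phi : E.graph →g g' := ⟨fun z => f z, fun h => hphi h⟩
    have hmr' : MonoReach g' Set.univ c' (f a) (f b) := by
      refine ⟨w.map phi, ?_⟩
      intro v hv
      rw [SimpleGraph.Walk.support_map] at hv
      obtain ⟨v0, hv0, rfl⟩ := List.mem_map.mp hv
      exact ⟨trivial, (hw v0 hv0).2⟩
    obtain ⟨w2, hw2⟩ := hc'2 (f a) (f b) hmr'
    let psi : g' →g E.graph := ⟨fun z => f.symm z, fun h => h⟩
    refine ⟨(w2.map psi).copy (f.symm_apply_apply a) (f.symm_apply_apply b), ?_⟩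
    rw [SimpleGraph.Walk.length_copy, SimpleGraph.Walk.length_map]
    exact hw2
end

section
/- Let (T,X) be a rooted tree-decomposition of a graph G with X = (X_t : t ∈ V(T)), let e be an edge of T, let (T_e',X') be the truncation of (T,X) at e, and let G_e = G[⋃_{t ∈ V(T_e')} X'_t]. Let m,s,r,k,N be integers and let L be a hereditarily (T,X,m,s,r,k,N)-extendable list-assignment of G. Let L' be a list-assignment of G_e such that L'(v) ⊇ L(v) for every v ∈ V(G_e) and 1_{L'} ∩ X_t = ∅ for every t ∈ V(T) − V(T_e'). If L' is (T_e',X',m,s,r,k)-legitimate, then L' is hereditarily (T_e',X',m,s,r,k,N)-extendable. -/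
open SimpleGraph

universe u v

private lemma extend_transfer {α β : Type*} (H : SimpleGraph β) (g : α ≃ β) (c : α → ℕ) {N : ℕ}
    (h : ∀ a b, MonoReach (H.comap ⇑g) Set.univ c a b →
      ∃ w : (H.comap ⇑g).Walk a b, w.length ≤ N) :
    ∀ a b, MonoReach H Set.univ (fun z => c (g.symm z)) a b →
      ∃ w : H.Walk a b, w.length ≤ N := by
  intro a b hmr
  obtain ⟨w, hw⟩ := hmr
  let hom1 : H →g H.comap ⇑g := ⟨⇑g.symm, fun {x y} hxy => by simpa using hxy⟩
  have hmono : ∀ v ∈ (w.map hom1).support, v ∈ (Set.univ : Set α) ∧ c v = c (g.symm a) := by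
    intro v hv
    rw [SimpleGraph.Walk.support_map, List.mem_map] at hv
    obtain ⟨x, hx, rfl⟩ := hv
    exact ⟨trivial, (hw x hx).2⟩
  obtain ⟨w2, hw2⟩ := h (g.symm a) (g.symm b) ⟨w.map hom1, hmono⟩
  let hom2 : H.comap ⇑g →g H := ⟨⇑g, fun hxy => hxy⟩
  refine ⟨(w2.map hom2).copy (g.apply_symm_apply a) (g.apply_symm_apply b), ?_⟩
  simpa using hw2

/-- **Lemma.** Let `(T,X)` be a rooted tree-decomposition of `G`, let `e = pq` be an
edge of `T` (with `q` the end of `e` further from the root), let `J` be the node set of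
the component `T_e` of `T − e` disjoint from the root (equivalently, the set of nodes
whose path to the root passes through `q`), and let `(T_e', X')` be the truncation of
`(T,X)` at `e`: `T_e'` is obtained from `T_e` by adding a new root (encoded `none`)
adjacent to `q`, with bag `X_p ∩ X_q`, all other bags unchanged. Let
`G_e = G[⋃_{t ∈ J} X_t]`. If `L` is a hereditarily `(T,X,m,s,r,k,N)`-extendable
list-assignment of `G`, and `L'` is a list-assignment of `G_e` with `L'(v) ⊇ L(v)` for
every vertex `v` of `G_e` and with `1_{L'} ∩ X_t = ∅` for every `t ∈ V(T) − V(T_e')`,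
and `L'` is `(T_e',X',m,s,r,k)`-legitimate, then `L'` is hereditarily
`(T_e',X',m,s,r,k,N)`-extendable. -/
theorem hereditarily_extendable_restricts_to_truncation
    {V : Type u} {ι : Type v} [Fintype V] [Fintype ι]
    (G : SimpleGraph V) (D : RTD V ι) (hD : D.IsTDOn G Set.univ)
    (p q : ι) (hpq : D.tree.Adj p q)
    (hq : D.tree.dist D.root q = D.tree.dist D.root p + 1)
    (J : Set ι)
    (hJ : J = {t | D.tree.dist D.root t = D.tree.dist D.root q + D.tree.dist q t})
    (hqJ : q ∈ J)
    (D' : RTD V (Option ↥J))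
    (hD'tree : ∀ a b : Option ↥J, D'.tree.Adj a b ↔
      ((∃ x y : ↥J, a = some x ∧ b = some y ∧ D.tree.Adj (x : ι) (y : ι)) ∨
        (a = none ∧ b = some ⟨q, hqJ⟩) ∨ (a = some ⟨q, hqJ⟩ ∧ b = none)))
    (hD'root : D'.root = none)
    (hD'bagroot : D'.bag none = D.bag p ∩ D.bag q)
    (hD'bag : ∀ t : ↥J, D'.bag (some t) = D.bag (t : ι))
    (A' : Set V) (hA' : A' = {v | ∃ t ∈ J, v ∈ D.bag t})
    (L : V → Finset ℕ) (hLne : ∀ x, (L x).Nonempty)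
    (m s r k N : ℕ)
    (hher : HeredExtOn G D Set.univ L m s r k N)
    (L' : V → Finset ℕ) (hL'ne : ∀ v ∈ A', (L' v).Nonempty)
    (hsup : ∀ v ∈ A', L v ⊆ L' v)
    (hout : ∀ t : ι, t ∉ J → ∀ v ∈ D.bag t, v ∈ A' → (L' v).card ≠ 1)
    (hleg' : LegitOn G D' A' L' m s r k) :
    HeredExtOn G D' A' L' m s r k N := by
  classical
  have hconn : D.tree.Connected := hD.1.isConnected
  have hmemJ : ∀ {t : ι}, t ∈ J →
      D.tree.dist D.root t = D.tree.dist D.root q + D.tree.dist q t := by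
    intro t ht; rw [hJ] at ht; exact ht
  have hpJ : p ∉ J := by
    intro hp
    have h1 := hmemJ hp
    omega
  have hsuppJ : ∀ {j : ι}, j ∈ J → ∀ (w : D.tree.Walk q j), w.length = D.tree.dist q j →
      ∀ x ∈ w.support, x ∈ J := by
    intro j hj w hw x hx
    obtain ⟨w1, w2, rfl⟩ := SimpleGraph.Walk.mem_support_iff_exists_append.mp hx
    have h1 : D.tree.dist q x ≤ w1.length := SimpleGraph.dist_le w1
    have h2 : D.tree.dist x j ≤ w2.length := SimpleGraph.dist_le w2
    have h3 : w1.length + w2.length = D.tree.dist q j := by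
      rw [← SimpleGraph.Walk.length_append]; exact hw
    have h4 : D.tree.dist q j ≤ D.tree.dist q x + D.tree.dist x j := hconn.dist_triangle
    have h5 : D.tree.dist D.root x ≤ D.tree.dist D.root q + D.tree.dist q x :=
      hconn.dist_triangle
    have h6 : D.tree.dist D.root j ≤ D.tree.dist D.root x + D.tree.dist x j :=
      hconn.dist_triangle
    have h7 := hmemJ hj
    rw [hJ]
    simp only [Set.mem_setOf_eq]
    omega
  have hlift : ∀ {x j : ι} (w : D.tree.Walk x j) (hx : x ∈ J) (hj : j ∈ J),
      (∀ v ∈ w.support, v ∈ J) →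
      ∃ w' : D'.tree.Walk (some ⟨x, hx⟩) (some ⟨j, hj⟩), w'.length = w.length := by
    intro x j w
    induction w with
    | nil => intro hx hj _; exact ⟨SimpleGraph.Walk.nil, rfl⟩
    | @cons u v t h pw ih =>
      intro hx hj hsupp
      have hv : v ∈ J := hsupp v (by simp)
      obtain ⟨w2, hw2⟩ := ih hv hj (fun z hz => hsupp z (by simp [hz]))
      have hadj : D'.tree.Adj (some ⟨u, hx⟩) (some ⟨v, hv⟩) :=
        (hD'tree _ _).mpr (Or.inl ⟨⟨u, hx⟩, ⟨v, hv⟩, rfl, rfl, h⟩)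
      exact ⟨SimpleGraph.Walk.cons hadj w2, by simp [hw2]⟩
  have hφ : ∀ {a b : Option ↥J}, D'.tree.Adj a b →
      D.tree.Adj (a.elim p (fun x => ↑x)) (b.elim p (fun x => ↑x)) := by
    intro a b hab
    rcases (hD'tree a b).mp hab with ⟨x, y, rfl, rfl, h⟩ | ⟨rfl, rfl⟩ | ⟨rfl, rfl⟩
    · exact h
    · exact hpq
    · exact hpq.symm
  have hdistp : ∀ {j : ι}, j ∈ J → D.tree.dist p j = 1 + D.tree.dist q j := by
    intro j hj
    have h1 : D.tree.dist p j ≤ D.tree.dist p q + D.tree.dist q j := hconn.dist_triangle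
    have h2 : D.tree.dist p q ≤ 1 := by
      have := SimpleGraph.dist_le hpq.toWalk
      simpa using this
    have h3 : D.tree.dist D.root j ≤ D.tree.dist D.root p + D.tree.dist p j :=
      hconn.dist_triangle
    have h4 := hmemJ hj
    omega
  have hdist' : ∀ (j : ι) (hj : j ∈ J),
      D'.tree.dist none (some ⟨j, hj⟩) = 1 + D.tree.dist q j := by
    intro j hj
    obtain ⟨w, hw⟩ := (hconn.preconnected q j).exists_walk_length_eq_dist
    obtain ⟨w', hl⟩ := hlift w hqJ hj (hsuppJ hj w hw)
    have hadj0 : D'.tree.Adj none (some ⟨q, hqJ⟩) :=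
      (hD'tree _ _).mpr (Or.inr (Or.inl ⟨rfl, rfl⟩))
    have hub : D'.tree.dist none (some ⟨j, hj⟩) ≤ D.tree.dist q j + 1 := by
      have := SimpleGraph.dist_le (SimpleGraph.Walk.cons hadj0 w')
      simpa [hl, hw] using this
    obtain ⟨w2, hw2⟩ :=
      ((SimpleGraph.Walk.cons hadj0 w').reachable).exists_walk_length_eq_dist
    have hmap : D.tree.dist p j ≤ w2.length := by
      have := SimpleGraph.dist_le
        (w2.map (⟨fun o => o.elim p (fun x => ↑x), fun h => hφ h⟩ : D'.tree →g D.tree))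
      exact le_of_le_of_eq this (SimpleGraph.Walk.length_map _ _)
    have hdp := hdistp hj
    omega
  refine ⟨hleg', ?_⟩
  intro A'' hA''sub L'' hsup'' hleg''
  have hbig : ∀ t : ι, t ∉ J → ∀ v ∈ A'', v ∈ D.bag t → 2 ≤ (L'' v).card := by
    intro t ht v hv hvb
    have hvA' : v ∈ A' := hA''sub hv
    have h1 := hout t ht v hvb hvA'
    have h2 : 0 < (L' v).card := (hL'ne v hvA').card_pos
    have h3 : (L' v).card ≤ (L'' v).card := Finset.card_le_card (hsup'' v hv)
    omega
  have hchain : ∀ v ∈ A'', L v ⊆ L'' v := fun v hv =>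
    (hsup v (hA''sub hv)).trans (hsup'' v hv)
  refine ⟨hleg'', ?_⟩
  intro t U instU E Lt hLtne hLtagree
  cases t with
  | some j =>
    obtain ⟨jv, hj⟩ := j
    have hlegD : LegitOn G D A'' L'' m s r k := by
      refine ⟨hleg''.1, ?_, hleg''.2.2⟩
      intro t
      by_cases ht : t ∈ J
      · obtain ⟨S, hS1, hS2, hS3⟩ := hleg''.2.1 (some ⟨t, ht⟩)
        rw [hD'bag ⟨t, ht⟩] at hS1 hS3
        exact ⟨S, hS1, hS2, hS3⟩
      · refine ⟨∅, Set.empty_subset _, by simp, ?_⟩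
        intro z hz h1
        have := hbig t ht z hz.1 hz.2
        omega
    have hext := hher.2 A'' (Set.subset_univ _) L'' hchain hlegD
    have hbagset : A'' ∩ D'.bag (some ⟨jv, hj⟩) = A'' ∩ D.bag jv := by
      rw [hD'bag ⟨jv, hj⟩]
    let f : (↥(A'' ∩ D'.bag (some ⟨jv, hj⟩)) ⊕ U) ≃ (↥(A'' ∩ D.bag jv) ⊕ U) :=
      ⟨Sum.map (fun x => ⟨x.1, hbagset ▸ x.2⟩) id,
       Sum.map (fun x => ⟨x.1, hbagset.symm ▸ x.2⟩) id,
       fun z => by cases z <;> rfl, fun z => by cases z <;> rfl⟩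
    have key : ∀ u : U, ∃ j' : ↥J, E.owner u = some j' ∧ D.IsChild jv ↑j' := by
      intro u
      obtain ⟨hadj, hdist⟩ := E.owner_child u
      rw [hD'root] at hdist
      cases ho : E.owner u with
      | none =>
        rw [ho] at hdist
        rw [SimpleGraph.dist_self] at hdist
        omega
      | some j' =>
        obtain ⟨j'v, hj'⟩ := j'
        rw [ho] at hadj hdist
        rcases (hD'tree _ _).mp hadj with ⟨x, y, hx, hy, hxy⟩ | ⟨h1, _⟩ | ⟨_, h2⟩
        · injection hx with hx'
          injection hy with hy'
          subst hx'; subst hy'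
          rw [hdist' j'v hj', hdist' jv hj] at hdist
          refine ⟨⟨j'v, hj'⟩, rfl, hxy, ?_⟩
          show D.tree.dist D.root j'v = D.tree.dist D.root jv + 1
          have ha := hmemJ hj
          have hb := hmemJ hj'
          omega
        · exact absurd h1 (by simp)
        · exact absurd h2 (by simp)
    choose ow how hchild using key
    let E₂ : ChildExt G D A'' jv U :=
      { graph := E.graph.comap ⇑f.symm
        owner := fun u => ↑(ow u)
        base_adj := fun x y => E.base_adj _ _
        owner_child := fun u => hchild u
        mixed_adj := by
          intro x u hadj
          have h := E.mixed_adj _ u hadj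
          rw [how u, hD'bag] at h
          exact h
        new_adj := by
          intro u u' h
          have h2 := E.new_adj u u' h
          rw [how u, how u'] at h2
          injection h2 with h3
          exact congrArg _ h3
        new_small := fun u₁ u₂ u₃ h1 h2 => E.new_small u₁ u₂ u₃ h1 h2 }
    obtain ⟨c₂, hc₂mem, hc₂N⟩ := hext.2 jv U instU E₂ (fun z => Lt (f.symm z))
      (fun z => hLtne _) (fun x => hLtagree _)
    refine ⟨fun z => c₂ (f.symm.symm z), ?_, ?_⟩
    · intro z
      have h := hc₂mem (f.symm.symm z)
      rwa [Equiv.symm_symm, Equiv.symm_apply_apply] at h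
    · exact extend_transfer E.graph f.symm c₂ hc₂N
  | none =>
    have hbagset : (A'' ∩ D'.bag none) ∩ D.bag p = A'' ∩ D'.bag none := by
      rw [hD'bagroot]
      ext v
      simp only [Set.mem_inter_iff]
      tauto
    have hA₀sub : A'' ∩ D'.bag none ⊆ A'' := Set.inter_subset_left
    have hinbagp : ∀ v ∈ A'' ∩ D'.bag none, v ∈ D.bag p := by
      intro v hv
      have := hv.2
      rw [hD'bagroot] at this
      exact this.1
    have hlegD : LegitOn G D (A'' ∩ D'.bag none) L'' m s r k := by
      refine ⟨fun v hv => hleg''.1 v (hA₀sub hv), ?_, ?_⟩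
      · intro t
        refine ⟨∅, Set.empty_subset _, by simp, ?_⟩
        intro z hz h1
        have := hbig p hpJ z (hA₀sub hz.1) (hinbagp z hz.1)
        omega
      · intro c hc a b hmr
        obtain ⟨w, hw⟩ := hmr
        have ha := hw a (SimpleGraph.Walk.start_mem_support w)
        have h1 : (L'' a).card = 1 := ha.1.2
        have := hbig p hpJ a (hA₀sub ha.1.1) (hinbagp a ha.1.1)
        omega
    have hext := hher.2 (A'' ∩ D'.bag none) (Set.subset_univ _) L''
      (fun v hv => hchain v (hA₀sub hv)) hlegD
    let f : (↥((A'' ∩ D'.bag none) ∩ D.bag p) ⊕ U) ≃ (↥(A'' ∩ D'.bag none) ⊕ U) :=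
      ⟨Sum.map (fun x => ⟨x.1, (Set.ext_iff.mp hbagset x.1).mp x.2⟩) id,
       Sum.map (fun x => ⟨x.1, (Set.ext_iff.mp hbagset x.1).mpr x.2⟩) id,
       fun z => by cases z <;> rfl, fun z => by cases z <;> rfl⟩
    have keyq : ∀ u : U, E.owner u = some ⟨q, hqJ⟩ := by
      intro u
      obtain ⟨hadj, _⟩ := E.owner_child u
      rcases (hD'tree _ _).mp hadj with ⟨x, y, hx, _, _⟩ | ⟨_, h2⟩ | ⟨h1, _⟩
      · exact absurd hx (by simp)
      · exact h2
      · exact absurd h1 (by simp)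
    let E₂ : ChildExt G D (A'' ∩ D'.bag none) p U :=
      { graph := E.graph.comap ⇑f
        owner := fun _ => q
        base_adj := fun x y => E.base_adj _ _
        owner_child := fun _ => ⟨hpq, hq⟩
        mixed_adj := by
          intro x u hadj
          have h := E.mixed_adj _ u hadj
          rw [keyq u, hD'bag] at h
          exact h
        new_adj := fun _ _ _ => rfl
        new_small := fun u₁ u₂ u₃ h1 h2 => E.new_small u₁ u₂ u₃ h1 h2 }
    obtain ⟨c₂, hc₂mem, hc₂N⟩ := hext.2 p U instU E₂ (fun z => Lt (f z))
      (fun z => hLtne _) (fun x => hLtagree _)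
    refine ⟨fun z => c₂ (f.symm z), ?_, ?_⟩
    · intro z
      have h := hc₂mem (f.symm z)
      rwa [Equiv.apply_symm_apply] at h
    · exact extend_transfer E.graph f c₂ hc₂N
end

section
/- Let d, g, p, k be positive integers with p ≥ 3k^{k+1} and g ≥ 4. If there exists a d-regular graph with girth at least g and chromatic number at least p, then there exist a bipartite graph G with maximum degree at most d·k^k and a k-list-assignment L of G such that every L-coloring of G has a monochromatic component whose vertex set has weak diameter in G greater than 2·⌊g/4⌋ − 3. -/
open SimpleGraph

/-- `G` has maximum degree at most `Δ`. -/
def MaxDegreeLE {V : Type*} (G : SimpleGraph V) (Δ : ℕ) : Prop :=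
  ∀ v, (G.neighborSet v).ncard ≤ Δ



private lemma path_loop_nil {α : Type*} {H : SimpleGraph α} {a : α} (p : H.Walk a a)
    (hp : p.IsPath) : p = SimpleGraph.Walk.nil := by
  cases p with
  | nil => rfl
  | cons h q =>
    exfalso
    rw [SimpleGraph.Walk.cons_isPath_iff] at hp
    exact hp.2 q.end_mem_support

private lemma path_first_edge {α : Type*} {H : SimpleGraph α} :
    ∀ {a b y : α} (p : H.Walk a b), p.IsPath → s(a, y) ∈ p.edges → y ≠ a →
      ∃ (h : H.Adj a y) (p' : H.Walk y b), p = SimpleGraph.Walk.cons h p' := by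
  intro a b y p hp hmem hya
  cases p with
  | nil => simp at hmem
  | cons h q =>
    rw [SimpleGraph.Walk.edges_cons, List.mem_cons] at hmem
    rcases hmem with hmem | hmem
    · rw [Sym2.eq_iff] at hmem
      rcases hmem with ⟨-, rfl⟩ | ⟨rfl, h2⟩
      · exact ⟨h, q, rfl⟩
      · exact absurd h2 hya
    · exfalso
      have : a ∈ q.support := SimpleGraph.Walk.fst_mem_support_of_mem_edges q hmem
      rw [SimpleGraph.Walk.cons_isPath_iff] at hp
      exact hp.2 this

/-- From an odd closed walk of length at most `n`, extract a cycle of length at most `n`. -/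
private lemma aux_exists_cycle {α : Type*} {H : SimpleGraph α} :
    ∀ (n : ℕ) ⦃u : α⦄ (w : H.Walk u u), Odd w.length → w.length ≤ n →
      ∃ (x : α) (cw : H.Walk x x), cw.IsCycle ∧ cw.length ≤ n := by
  classical
  intro n
  induction n with
  | zero =>
    intro u w hodd hle
    rw [Nat.odd_iff] at hodd
    omega
  | succ n ih =>
    intro u w hodd hle
    by_cases hnd : w.support.tail.Nodup
    · -- w is a cycle
      cases w with
      | nil => simp [Nat.odd_iff] at hodd
      | cons hadj rest =>
        rename_i v
        have hrest : rest.support.Nodup := by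
          simpa using hnd
        have hpath : rest.IsPath := SimpleGraph.Walk.IsPath.mk' hrest
        have hedge : ¬ s(u, v) ∈ rest.edges := by
          intro hmem
          have hmem' : s(u, v) ∈ rest.reverse.edges := by
            rw [SimpleGraph.Walk.edges_reverse, List.mem_reverse]
            exact hmem
          obtain ⟨h', p', hq⟩ := path_first_edge rest.reverse hpath.reverse hmem' hadj.ne'
          have hrev := hpath.reverse
          rw [hq, SimpleGraph.Walk.cons_isPath_iff] at hrev
          have hnil := path_loop_nil p' hrev.1
          have hlen1 : rest.length = 1 := by
            have hlq := congrArg SimpleGraph.Walk.length hq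
            rw [SimpleGraph.Walk.length_reverse, hnil] at hlq
            simpa using hlq
          rw [Nat.odd_iff] at hodd
          rw [SimpleGraph.Walk.length_cons, hlen1] at hodd
          omega
        exact ⟨u, SimpleGraph.Walk.cons hadj rest,
          (SimpleGraph.Walk.cons_isCycle_iff rest hadj).mpr ⟨hpath, hedge⟩, hle⟩
    · obtain ⟨x, hdup⟩ := List.exists_duplicate_iff_not_nodup.mpr hnd
      have hx : x ∈ w.support := List.mem_of_mem_tail hdup.mem
      have hrotlen : (w.rotate x hx).length = w.length := by
        have h1 := congrArg SimpleGraph.Walk.length (w.take_spec hx)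
        rw [SimpleGraph.Walk.length_append] at h1
        have h2 : (w.rotate x hx).length
            = (w.dropUntil x hx).length + (w.takeUntil x hx).length := by
          rw [SimpleGraph.Walk.rotate, SimpleGraph.Walk.length_append]
        omega
      have hdup' : 2 ≤ (w.rotate x hx).support.tail.count x := by
        have hperm := (SimpleGraph.Walk.support_rotate w x hx).perm
        rw [List.Perm.count_eq hperm]
        exact List.duplicate_iff_two_le_count.mp hdup
      generalize hw' : w.rotate x hx = w' at hrotlen hdup'
      cases w' with
      | nil => simp at hdup'
      | cons hadj rest =>
        rename_i y
        rw [SimpleGraph.Walk.support_cons, List.tail_cons] at hdup'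
        have hxr : x ∈ rest.support := by
          have : 0 < rest.support.count x := by omega
          exact List.count_pos_iff.mp this
        have hsum : (rest.takeUntil x hxr).length + (rest.dropUntil x hxr).length
            = rest.length := by
          have h1 := congrArg SimpleGraph.Walk.length (rest.take_spec hxr)
          rw [SimpleGraph.Walk.length_append] at h1
          exact h1
        have hcount1 : (rest.takeUntil x hxr).support.count x = 1 :=
          SimpleGraph.Walk.count_support_takeUntil_eq_one rest hxr
        have hdpos : 1 ≤ (rest.dropUntil x hxr).length := by
          have hsa : rest.support
              = (rest.takeUntil x hxr).support ++ (rest.dropUntil x hxr).support.tail := by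
            conv_lhs => rw [← rest.take_spec hxr]
            exact SimpleGraph.Walk.support_append _ _
          rw [hsa, List.count_append] at hdup'
          have : 1 ≤ (rest.dropUntil x hxr).support.tail.count x := by omega
          have hmem : x ∈ (rest.dropUntil x hxr).support.tail := by
            rw [← List.count_pos_iff]
            omega
          have hlen := List.length_pos_of_mem hmem
          have : (rest.dropUntil x hxr).support.length = (rest.dropUntil x hxr).length + 1 :=
            SimpleGraph.Walk.length_support _
          rw [List.length_tail, this] at hlen
          omega
        have hlensum : (SimpleGraph.Walk.cons hadj (rest.takeUntil x hxr)).length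
            + (rest.dropUntil x hxr).length = w.length := by
          rw [SimpleGraph.Walk.length_cons]
          rw [SimpleGraph.Walk.length_cons] at hrotlen
          omega
        rcases Nat.even_or_odd (SimpleGraph.Walk.cons hadj (rest.takeUntil x hxr)).length
          with hev | hod
        · -- drop part is odd
          have hod2 : Odd (rest.dropUntil x hxr).length := by
            rw [Nat.odd_iff] at hodd ⊢
            rw [Nat.even_iff] at hev
            omega
          obtain ⟨x', cw, hcyc, hcl⟩ := ih (rest.dropUntil x hxr) hod2 (by
            have h1 : 1 ≤ (SimpleGraph.Walk.cons hadj (rest.takeUntil x hxr)).length := by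
              rw [SimpleGraph.Walk.length_cons]; omega
            omega)
          exact ⟨x', cw, hcyc, hcl.trans (Nat.le_succ n)⟩
        · obtain ⟨x', cw, hcyc, hcl⟩ := ih (SimpleGraph.Walk.cons hadj (rest.takeUntil x hxr))
            hod (by omega)
          exact ⟨x', cw, hcyc, hcl.trans (Nat.le_succ n)⟩



private lemma aux_even_dist_walk {α : Type*} {H : SimpleGraph α} (u₀ : α) (D : ℕ)
    (hshort : ∀ (x : α) (cw : H.Walk x x), Odd cw.length → cw.length ≤ 2 * D → False) :
    ∀ {a b : α} (q : H.Walk a b),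
      (∀ x ∈ q.support, H.dist u₀ x < D ∧ H.Reachable u₀ x) →
      Even (H.dist u₀ a + H.dist u₀ b + q.length) := by
  intro a b q
  induction q with
  | nil =>
    intro _
    simpa using Even.add_self _
  | @cons a y b hadj q ih =>
    intro hsupp
    have ha := hsupp a (by simp)
    have hy := hsupp y (by
      rw [SimpleGraph.Walk.support_cons]
      exact List.mem_cons_of_mem _ q.start_mem_support)
    have IH := ih (fun x hx => hsupp x (by
      rw [SimpleGraph.Walk.support_cons]; exact List.mem_cons_of_mem _ hx))
    have hpar : ¬ Even (H.dist u₀ a + H.dist u₀ y) := by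
      intro hcon
      obtain ⟨wa, hwa⟩ := ha.2.exists_walk_length_eq_dist
      obtain ⟨wy, hwy⟩ := hy.2.exists_walk_length_eq_dist
      refine hshort u₀ (wa.append (SimpleGraph.Walk.cons hadj wy.reverse)) ?_ ?_
      · rw [SimpleGraph.Walk.length_append, SimpleGraph.Walk.length_cons,
          SimpleGraph.Walk.length_reverse, hwa, hwy]
        rw [Nat.even_iff] at hcon
        rw [Nat.odd_iff]
        omega
      · rw [SimpleGraph.Walk.length_append, SimpleGraph.Walk.length_cons,
          SimpleGraph.Walk.length_reverse, hwa, hwy]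
        have h1 := ha.1
        have h2 := hy.1
        omega
    rw [SimpleGraph.Walk.length_cons]
    rw [Nat.even_iff] at IH ⊢
    rw [Nat.not_even_iff] at hpar
    omega

private lemma aux_odd_closed_walk {α : Type*} (G' : SimpleGraph α)
    (h : ¬ G'.Colorable 2) : ∃ (x : α) (wk : G'.Walk x x), Odd wk.length := by
  by_contra hno
  push_neg at hno
  apply h
  refine ⟨SimpleGraph.Coloring.mk
    (fun v => (⟨(G'.dist (Quot.out (G'.connectedComponentMk v)) v) % 2, by omega⟩ : Fin 2)) ?_⟩
  intro u v hadj heq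
  have hcc : G'.connectedComponentMk u = G'.connectedComponentMk v :=
    SimpleGraph.ConnectedComponent.sound hadj.reachable
  have hrv : Quot.out (G'.connectedComponentMk v) = Quot.out (G'.connectedComponentMk u) := by
    rw [hcc]
  have hru : G'.Reachable (Quot.out (G'.connectedComponentMk u)) u := by
    have hout : G'.connectedComponentMk (Quot.out (G'.connectedComponentMk u))
        = G'.connectedComponentMk u := Quot.out_eq _
    exact SimpleGraph.ConnectedComponent.eq.mp hout
  have hrv' : G'.Reachable (Quot.out (G'.connectedComponentMk u)) v :=
    hru.trans hadj.reachable
  obtain ⟨wu, hwu⟩ := hru.exists_walk_length_eq_dist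
  obtain ⟨wv, hwv⟩ := hrv'.exists_walk_length_eq_dist
  have hodd := hno (Quot.out (G'.connectedComponentMk u))
    (wu.append (SimpleGraph.Walk.cons hadj wv.reverse))
  rw [Nat.not_odd_iff_even, SimpleGraph.Walk.length_append, SimpleGraph.Walk.length_cons,
    SimpleGraph.Walk.length_reverse, hwu, hwv, Nat.even_iff] at hodd
  have hval : G'.dist (Quot.out (G'.connectedComponentMk u)) u % 2
      = G'.dist (Quot.out (G'.connectedComponentMk v)) v % 2 := by
    have := congrArg Fin.val heq
    simpa using this
  rw [hrv] at hval
  omega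

private lemma aux_four_pow_le (k : ℕ) : 1 ≤ k → 4 ^ (k - 1) ≤ k ^ k := by
  induction k with
  | zero => omega
  | succ n ih =>
    intro _
    rcases Nat.lt_or_ge n 3 with h3 | h3
    · interval_cases n <;> norm_num
    · have hn : 1 ≤ n := by omega
      have h4 : 4 ^ (n - 1) ≤ n ^ n := ih hn
      have hsplit : 4 ^ n = 4 * 4 ^ (n - 1) := by
        rw [← pow_succ']
        congr 1
        omega
      calc 4 ^ (n + 1 - 1) = 4 * 4 ^ (n - 1) := by rw [Nat.succ_sub_one, hsplit]
        _ ≤ 4 * n ^ n := Nat.mul_le_mul_left 4 h4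
        _ ≤ (n + 1) * (n + 1) ^ n :=
            Nat.mul_le_mul (by omega) (Nat.pow_le_pow_left (by omega) n)
        _ = (n + 1) ^ (n + 1) := (pow_succ' _ _).symm

private lemma aux_choose_le (k : ℕ) (hk : 1 ≤ k) : (2 * k - 1).choose k ≤ k ^ k := by
  have h1 : (2 * k - 1).choose (k - 1) = (2 * k - 1).choose k := by
    have h := Nat.choose_symm (show k ≤ 2 * k - 1 by omega)
    rw [show 2 * k - 1 - k = k - 1 by omega] at h
    exact h
  have h2 : (2 * k - 1).choose (k - 1) ≤ 4 ^ (k - 1) := by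
    have h := Nat.choose_middle_le_pow (k - 1)
    rw [show 2 * (k - 1) + 1 = 2 * k - 1 by omega] at h
    exact h
  rw [← h1]
  exact h2.trans (aux_four_pow_le k hk)

/-- **Lemma.** Let `d, g, p, k` be positive integers with `p ≥ 3k^{k+1}` and `g ≥ 4`.
If there exists a `d`-regular graph with girth at least `g` and chromatic number at
least `p`, then there exist a bipartite graph `G` with maximum degree at most `d·k^k`
and a `k`-list-assignment `L` of `G` such that every `L`-coloring of `G` has a
monochromatic component whose vertex set has weak diameter in `G` greater than
`2⌊g/4⌋ − 3`. -/
theorem girth_chromatic_weak_diameter_construction (d g p k : ℕ)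
    (hd : 0 < d) (hg : 4 ≤ g) (hp : 0 < p) (hk : 0 < k)
    (hpk : 3 * k ^ (k + 1) ≤ p)
    (hexists : ∃ (W : Type) (_ : Fintype W) (H : SimpleGraph W),
      (∀ w, (H.neighborSet w).ncard = d) ∧
      (g : ℕ∞) ≤ H.girth ∧
      (p : ℕ∞) ≤ H.chromaticNumber) :
    ∃ (V : Type) (_ : Fintype V) (G : SimpleGraph V) (L : V → Finset ℕ),
      G.Colorable 2 ∧
      MaxDegreeLE G (d * k ^ k) ∧
      (∀ x, (L x).Nonempty) ∧
      (∀ x, (L x).card = k) ∧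
      ∀ c : V → ℕ, (∀ x, c x ∈ L x) →
        ∃ a b : V, MonoReach G Set.univ c a b ∧
          2 * ((g / 4 : ℕ) : ℤ) - 3 < (G.dist a b : ℤ) := by
  classical
  obtain ⟨W, instW, H, hreg, hgirth, hchrom⟩ := hexists
  have hgirthN : g ≤ H.girth := by exact_mod_cast hgirth
  have hcycleB : ∀ (x : W) (cw : H.Walk x x), cw.IsCycle → g ≤ cw.length := by
    intro x cw hcyc
    have h1 : H.egirth ≤ cw.length := le_egirth.mp le_rfl x cw hcyc
    have h2 : H.girth ≤ cw.length := by
      have h3 := ENat.toNat_le_toNat h1 (by simp)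
      simpa [SimpleGraph.girth] using h3
    omega
  let Sig := {A : Finset (Fin (2 * k - 1)) // A.card = k}
  let V := W × Bool × Sig
  let G : SimpleGraph V :=
    ⟨fun x y => H.Adj x.1 y.1 ∧ x.2.1 ≠ y.2.1,
     ⟨fun x y h => ⟨h.1.symm, Ne.symm h.2⟩⟩,
     ⟨fun x h => h.2 rfl⟩⟩
  let L : V → Finset ℕ := fun x => x.2.2.1.map Fin.valEmbedding
  have hSigcard : Nat.card Sig ≤ k ^ k := by
    have h1 : Nat.card Sig = (2 * k - 1).choose k := by
      rw [Nat.card_eq_fintype_card, Fintype.card_subtype]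
      have h2 : (Finset.univ.filter fun A : Finset (Fin (2 * k - 1)) => A.card = k)
          = Finset.powersetCard k Finset.univ := by
        ext A
        simp [Finset.mem_powersetCard_univ]
      rw [h2, Finset.card_powersetCard]
      simp
    rw [h1]
    exact aux_choose_le k hk
  refine ⟨V, inferInstance, G, L, ?_, ?_, ?_, ?_, ?_⟩
  · refine ⟨SimpleGraph.Coloring.mk (fun x => if x.2.1 then 0 else 1) ?_⟩
    intro a b hab h
    obtain ⟨-, hne⟩ := hab
    cases ha : a.2.1 <;> cases hb : b.2.1 <;> simp_all
  · rintro ⟨xw, xb, xs⟩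
    have e : (G.neighborSet (xw, xb, xs)) ≃ (H.neighborSet xw) × Sig :=
      { toFun := fun y => (⟨y.1.1, y.2.1⟩, y.1.2.2)
        invFun := fun pz => ⟨(pz.1.1, !xb, pz.2), ⟨pz.1.2, (Bool.not_ne_self xb).symm⟩⟩
        left_inv := by
          rintro ⟨⟨yw, yb, ys⟩, hy⟩
          apply Subtype.ext
          show ((yw, !xb, ys) : V) = (yw, yb, ys)
          have hne : xb ≠ yb := (hy : G.Adj (xw, xb, xs) (yw, yb, ys)).2
          have hb : (!xb) = yb := by
            cases xb <;> cases yb <;> simp_all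
          rw [hb]
        right_inv := by
          rintro ⟨⟨yw, hyw⟩, ys⟩
          rfl }
    calc (G.neighborSet (xw, xb, xs)).ncard
        = Nat.card (G.neighborSet (xw, xb, xs)) := (Nat.card_coe_set_eq _).symm
      _ = Nat.card ((H.neighborSet xw) × Sig) := Nat.card_congr e
      _ = Nat.card (H.neighborSet xw) * Nat.card Sig := Nat.card_prod _ _
      _ = d * Nat.card Sig := by rw [Nat.card_coe_set_eq, hreg]
      _ ≤ d * k ^ k := Nat.mul_le_mul_left d hSigcard
  · intro x
    rw [← Finset.card_pos, Finset.card_map, x.2.2.2]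
    omega
  · intro x
    rw [Finset.card_map]
    exact x.2.2.2
  · intro c hc
    have key : ∀ u : W, ∃ γ : Fin (2 * k - 1), ∀ ε : Bool,
        ∃ A : Sig, c (u, ε, A) = (γ : ℕ) := by
      intro u
      have hS : ∀ ε : Bool,
          k ≤ (Finset.univ.filter fun γ : Fin (2 * k - 1) =>
            ∃ A : Sig, c (u, ε, A) = (γ : ℕ)).card := by
        intro ε
        by_contra hlt
        push_neg at hlt
        have hcompl : k ≤ (Finset.univ \ (Finset.univ.filter fun γ : Fin (2 * k - 1) =>
            ∃ A : Sig, c (u, ε, A) = (γ : ℕ))).card := by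
          rw [Finset.card_sdiff_of_subset (Finset.subset_univ _), Finset.card_univ, Fintype.card_fin]
          omega
        obtain ⟨B, hBsub, hBcard⟩ := Finset.exists_subset_card_eq hcompl
        have hmem : c (u, ε, ⟨B, hBcard⟩) ∈ B.map Fin.valEmbedding := hc (u, ε, ⟨B, hBcard⟩)
        obtain ⟨γ, hγB, hγv⟩ := Finset.mem_map.mp hmem
        have hγ2 := hBsub hγB
        rw [Finset.mem_sdiff, Finset.mem_filter] at hγ2
        exact hγ2.2 ⟨Finset.mem_univ _, ⟨⟨B, hBcard⟩, hγv.symm⟩⟩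
      have hu := Finset.card_union_add_card_inter
        (Finset.univ.filter fun γ : Fin (2 * k - 1) => ∃ A : Sig, c (u, false, A) = (γ : ℕ))
        (Finset.univ.filter fun γ : Fin (2 * k - 1) => ∃ A : Sig, c (u, true, A) = (γ : ℕ))
      have hle2 : ((Finset.univ.filter fun γ : Fin (2 * k - 1) =>
            ∃ A : Sig, c (u, false, A) = (γ : ℕ)) ∪
          (Finset.univ.filter fun γ : Fin (2 * k - 1) =>
            ∃ A : Sig, c (u, true, A) = (γ : ℕ))).card ≤ 2 * k - 1 := by
        exact le_trans (Finset.card_le_univ _) (by simp)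
      have h0 := hS false
      have h1 := hS true
      have hpos : 0 < ((Finset.univ.filter fun γ : Fin (2 * k - 1) =>
            ∃ A : Sig, c (u, false, A) = (γ : ℕ)) ∩
          (Finset.univ.filter fun γ : Fin (2 * k - 1) =>
            ∃ A : Sig, c (u, true, A) = (γ : ℕ))).card := by omega
      obtain ⟨γ, hγ⟩ := Finset.card_pos.mp hpos
      rw [Finset.mem_inter, Finset.mem_filter, Finset.mem_filter] at hγ
      refine ⟨γ, fun ε => ?_⟩
      cases ε
      · exact hγ.1.2
      · exact hγ.2.2
    choose ψ hψ using key
    have hγ0 : ∃ γ0 : Fin (2 * k - 1),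
        ¬ (SimpleGraph.comap (Subtype.val : {v : W // ψ v = γ0} → W) H).Colorable 2 := by
      by_contra h2
      push_neg at h2
      have cols : ∀ γ0 : Fin (2 * k - 1),
          (SimpleGraph.comap (Subtype.val : {v : W // ψ v = γ0} → W) H).Coloring (Fin 2) :=
        fun γ0 => (h2 γ0).some
      have hkey : ∀ (w : W) (γ : Fin (2 * k - 1)) (hw : ψ w = γ),
          cols (ψ w) ⟨w, rfl⟩ = cols γ ⟨w, hw⟩ := by
        intro w γ hw
        subst hw
        rfl
      have F : H.Coloring (Fin (2 * k - 1) × Fin 2) := by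
        refine SimpleGraph.Coloring.mk (fun v => (ψ v, cols (ψ v) ⟨v, rfl⟩)) ?_
        intro a b hab heq
        rw [Prod.mk.injEq] at heq
        obtain ⟨h1, h2'⟩ := heq
        rw [hkey a (ψ b) h1] at h2'
        exact (cols (ψ b)).valid
          (show (SimpleGraph.comap (Subtype.val : {v : W // ψ v = ψ b} → W) H).Adj
            ⟨a, h1⟩ ⟨b, rfl⟩ from hab) h2'
      have hcol := F.colorable
      rw [Fintype.card_prod, Fintype.card_fin, Fintype.card_fin] at hcol
      have hch := hcol.chromaticNumber_le
      have hple : (p : ℕ∞) ≤ ((2 * k - 1) * 2 : ℕ) := le_trans hchrom hch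
      have hpn : p ≤ (2 * k - 1) * 2 := by exact_mod_cast hple
      have hkk : k * k ≤ k ^ (k + 1) := by
        calc k * k = k ^ 2 := (sq k).symm
          _ ≤ k ^ (k + 1) := Nat.pow_le_pow_right hk (by omega)
      have hfinal : 3 * (k * k) ≤ (2 * k - 1) * 2 :=
        le_trans (le_trans (Nat.mul_le_mul_left 3 hkk) hpk) hpn
      rcases Nat.lt_or_ge k 2 with hsm | hlg
      · interval_cases k
        · norm_num at hfinal
      · have h6 : 2 * k ≤ k * k := Nat.mul_le_mul_right k hlg
        generalize k * k = K at hfinal h6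
        omega
    obtain ⟨γ0, hγ0⟩ := hγ0
    obtain ⟨x₀, wk, hwkodd⟩ := aux_odd_closed_walk _ hγ0
    let ι : (SimpleGraph.comap (Subtype.val : {v : W // ψ v = γ0} → W) H) →g H :=
      ⟨Subtype.val, fun {a b} hab => hab⟩
    let w : H.Walk x₀.val x₀.val := wk.map ι
    have hwodd : Odd w.length := by
      show Odd (wk.map ι).length
      rwa [SimpleGraph.Walk.length_map]
    have hwsupp : ∀ z ∈ w.support, ψ z = γ0 := by
      intro z hz
      rw [show w = wk.map ι from rfl, SimpleGraph.Walk.support_map] at hz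
      obtain ⟨z', hz', rfl⟩ := List.mem_map.mp hz
      exact z'.2
    have hshort : ∀ (x : W) (cw : H.Walk x x), Odd cw.length →
        cw.length ≤ 2 * (2 * (g / 4) - 2) → False := by
      intro x cw hodd hlen
      obtain ⟨x', cw', hcyc, hlen'⟩ := aux_exists_cycle (2 * (2 * (g / 4) - 2)) cw hodd hlen
      have hgb := hcycleB x' cw' hcyc
      omega
    have hfar : ∃ x ∈ w.support, 2 * (g / 4) - 2 ≤ H.dist x₀.val x := by
      by_contra hno
      push_neg at hno
      have heven := aux_even_dist_walk x₀.val (2 * (g / 4) - 2) hshort w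
        (fun x hx => ⟨hno x hx, ⟨w.takeUntil x hx⟩⟩)
      rw [SimpleGraph.dist_self, Nat.even_iff] at heven
      rw [Nat.odd_iff] at hwodd
      omega
    obtain ⟨x, hxs, hxd⟩ := hfar
    have mono : ∀ {a b : W} (q : H.Walk a b), (∀ z ∈ q.support, ψ z = γ0) → ∀ ε : Bool,
        ∃ (A : Sig) (y : V) (gw : G.Walk (a, ε, A) y),
          y.1 = b ∧ (∀ z ∈ gw.support, c z = (γ0 : ℕ)) := by
      intro a b q
      induction q with
      | nil =>
        rename_i u
        intro hs ε
        obtain ⟨A, hA⟩ := hψ u ε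
        refine ⟨A, (u, ε, A), (SimpleGraph.Walk.nil : G.Walk (u, ε, A) (u, ε, A)), rfl, ?_⟩
        intro z hz
        rw [SimpleGraph.Walk.support_nil, List.mem_singleton] at hz
        subst hz
        rw [hA, hs u (by simp)]
      | @cons u u' v hadj q' ih =>
        intro hs ε
        obtain ⟨A', y, gw, hy, hcol⟩ := ih (fun z hz => hs z (by
          rw [SimpleGraph.Walk.support_cons]
          exact List.mem_cons_of_mem _ hz)) (!ε)
        obtain ⟨A, hA⟩ := hψ u ε
        refine ⟨A, y, SimpleGraph.Walk.cons ⟨hadj, (Bool.not_ne_self ε).symm⟩ gw, hy, ?_⟩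
        intro z hz
        rw [SimpleGraph.Walk.support_cons] at hz
        rcases List.mem_cons.mp hz with rfl | hz'
        · rw [hA, hs u (SimpleGraph.Walk.start_mem_support _)]
        · exact hcol z hz'
    obtain ⟨A, y, gw, hy, hcol⟩ := mono (w.takeUntil x hxs)
      (fun z hz => hwsupp z (SimpleGraph.Walk.support_takeUntil_subset _ hxs hz)) false
    refine ⟨(x₀.val, false, A), y, ⟨gw, ?_⟩, ?_⟩
    · intro v hv
      exact ⟨Set.mem_univ _, (hcol v hv).trans (hcol _ gw.start_mem_support).symm⟩
    · let π : G →g H := ⟨fun z => z.1, fun {z z'} hzz => hzz.1⟩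
      obtain ⟨ω, hω⟩ := (SimpleGraph.Walk.reachable gw).exists_walk_length_eq_dist
      have hdle : H.dist x₀.val y.1 ≤ (ω.map π).length := SimpleGraph.dist_le _
      rw [SimpleGraph.Walk.length_map, hω, hy] at hdle
      have hfin : 2 * (g / 4) - 2 ≤ G.dist (x₀.val, false, A) y := le_trans hxd hdle
      have hg4 : 1 ≤ g / 4 := by omega
      omega
end
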